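/- Let A and B be nondegenerate observables on ℂ² with orthonormal eigenbases, and let E(A,B) = {(H(A|ρ), H(B|ρ)) : ρ a 2×2 density matrix} ⊆ ℝ². Then the set of noise pairs {(N(M,A), N(M,B)) : (M_m)_m a POVM on ℂ²} equals the convex hull of E(A,B). -/

import Mathlib

open Matrix
open scoped ComplexOrder

noncomputable section

/-- The binary-entropy-type function `h(x) = -((1+x)/2)·log₂((1+x)/2) - ((1-x)/2)·log₂((1-x)/2)`
(with the convention `0·log₂ 0 = 0`, automatic since `Real.logb 2 0 = 0`). -/
def hFun (x : ℝ) : ℝ :=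
  -(((1 + x) / 2) * Real.logb 2 ((1 + x) / 2)) - ((1 - x) / 2) * Real.logb 2 ((1 - x) / 2)

/-- `g : [0,1] → [0,1]` is the inverse of `h` on `[0,1]`. -/
def gFun : ℝ → ℝ := Function.invFunOn hFun (Set.Icc 0 1)

/-- The (real) quadratic form `⟨v|M|v⟩`. -/
def qform {d : ℕ} (M : Matrix (Fin d) (Fin d) ℂ) (v : Fin d → ℂ) : ℝ :=
  (star v ⬝ᵥ M.mulVec v).re

/-- `v` is an orthonormal basis (family) of `ℂ^d`. -/
def IsONB {d : ℕ} (v : Fin d → Fin d → ℂ) : Prop :=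
  ∀ i j, star (v i) ⬝ᵥ v j = if i = j then 1 else 0

/-- A POVM: a finite family of positive semidefinite matrices summing to the identity. -/
def IsPOVM {d : ℕ} {ι : Type*} [Fintype ι] (M : ι → Matrix (Fin d) (Fin d) ℂ) : Prop :=
  (∀ m, (M m).PosSemidef) ∧ ∑ m, M m = 1

/-- A density matrix: positive semidefinite with trace 1. -/
def IsDensity {d : ℕ} (ρ : Matrix (Fin d) (Fin d) ℂ) : Prop :=
  ρ.PosSemidef ∧ ρ.trace = 1

/-- The noise `N(M,A) = -Σ_{m,a} p(m,a)·log₂(p(m,a)/p(m))` with `p(m,a) = (1/d)·⟨a|M_m|a⟩`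
and `p(m) = (1/d)·Tr[M_m]`, for an observable `A` with orthonormal eigenbasis `v`. -/
def noise {d : ℕ} {ι : Type*} [Fintype ι] (M : ι → Matrix (Fin d) (Fin d) ℂ)
    (v : Fin d → Fin d → ℂ) : ℝ :=
  -∑ m, ∑ a, ((1 / (d : ℝ)) * qform (M m) (v a)) *
      Real.logb 2 (((1 / (d : ℝ)) * qform (M m) (v a)) / ((1 / (d : ℝ)) * (M m).trace.re))

/-- `H(A|ρ) = -Σ_a ⟨a|ρ|a⟩·log₂⟨a|ρ|a⟩` for an observable with orthonormal eigenbasis `v`. -/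
def Hobs {d : ℕ} (v : Fin d → Fin d → ℂ) (ρ : Matrix (Fin d) (Fin d) ℂ) : ℝ :=
  -∑ a, qform ρ (v a) * Real.logb 2 (qform ρ (v a))

/-- Conditional Shannon entropy `H(X|Y) = -Σ_{x,y} p(x,y)·log₂(p(x,y)/p(y))` of a finite joint
distribution, conditioning on the second variable. -/
def condEnt {X Y : Type*} [Fintype X] [Fintype Y] (p : X → Y → ℝ) : ℝ :=
  -∑ x, ∑ y, p x y * Real.logb 2 (p x y / ∑ x', p x' y)

/-- Pauli matrix σ_x. -/
def σx : Matrix (Fin 2) (Fin 2) ℂ := !![0, 1; 1, 0]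
/-- Pauli matrix σ_y. -/
def σy : Matrix (Fin 2) (Fin 2) ℂ := !![0, -Complex.I; Complex.I, 0]
/-- Pauli matrix σ_z. -/
def σz : Matrix (Fin 2) (Fin 2) ℂ := !![1, 0; 0, -1]

/-- `v·σ = v₁σ_x + v₂σ_y + v₃σ_z` for `v ∈ ℝ³`. -/
def vecσ (v : Fin 3 → ℝ) : Matrix (Fin 2) (Fin 2) ℂ :=
  (v 0 : ℂ) • σx + (v 1 : ℂ) • σy + (v 2 : ℂ) • σz

/-- The canonical orthonormal eigenbasis of σ_z. -/
def basisZ : Fin 2 → Fin 2 → ℂ := fun i j => if i = j then 1 else 0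

/-- The canonical orthonormal eigenbasis `|±x⟩` of σ_x. -/
def basisX : Fin 2 → Fin 2 → ℂ := fun i =>
  ![((1 / Real.sqrt 2 : ℝ) : ℂ),
    if i = 0 then ((1 / Real.sqrt 2 : ℝ) : ℂ) else (-(1 / Real.sqrt 2 : ℝ) : ℂ)]

/-- Eigenvalues `+1, -1` of a (nondegenerate) Pauli observable. -/
def pmEig : Fin 2 → ℂ := fun i => if i = 0 then 1 else -1

end

noncomputable section NoiseHelpers

open Finset

lemma qform_nonneg {d : ℕ} {M : Matrix (Fin d) (Fin d) ℂ} (hM : M.PosSemidef)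
    (x : Fin d → ℂ) : 0 ≤ qform M x := by
  have h := hM.dotProduct_mulVec_nonneg x
  rw [Complex.le_def] at h
  simpa [qform] using h.1

lemma onb_sum_dot {d : ℕ} {v : Fin d → Fin d → ℂ} (hv : IsONB v)
    (M : Matrix (Fin d) (Fin d) ℂ) :
    ∑ a, star (v a) ⬝ᵥ M.mulVec (v a) = M.trace := by
  classical
  set U : Matrix (Fin d) (Fin d) ℂ := Matrix.of fun i a => v a i with hU
  have hUU : Uᴴ * U = 1 := by
    ext a b
    simpa [Matrix.mul_apply, Matrix.conjTranspose_apply, hU, Matrix.one_apply,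
      dotProduct] using hv a b
  have hUU' : U * Uᴴ = 1 := mul_eq_one_comm.mp hUU
  have h1 : ∑ a, star (v a) ⬝ᵥ M.mulVec (v a) = (Uᴴ * M * U).trace := by
    rw [Matrix.trace]
    refine Finset.sum_congr rfl fun a _ => ?_
    simp only [Matrix.diag_apply, Matrix.mul_apply, Matrix.conjTranspose_apply, hU,
      Matrix.of_apply, dotProduct, Matrix.mulVec, Finset.sum_mul, Finset.mul_sum,
      Pi.star_apply]
    rw [Finset.sum_comm]
    exact Finset.sum_congr rfl fun i _ => Finset.sum_congr rfl fun j _ => by ring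
  rw [h1, Matrix.mul_assoc, Matrix.trace_mul_comm, Matrix.mul_assoc, hUU',
    Matrix.mul_one]

lemma onb_sum_qform {d : ℕ} {v : Fin d → Fin d → ℂ} (hv : IsONB v)
    (M : Matrix (Fin d) (Fin d) ℂ) :
    ∑ a, qform M (v a) = M.trace.re := by
  rw [← onb_sum_dot hv M, Complex.re_sum]
  rfl

lemma trace_coe_of_posSemidef {d : ℕ} {M : Matrix (Fin d) (Fin d) ℂ}
    (hM : M.PosSemidef) : M.trace = (M.trace.re : ℂ) := by
  have him : M.trace.im = 0 := by
    rw [Matrix.trace, Complex.im_sum]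
    refine Finset.sum_eq_zero fun i _ => ?_
    show (M i i).im = 0
    have : M i i = star (M i i) := by
      conv_lhs => rw [← hM.1]
      simp [Matrix.conjTranspose_apply]
    have h2 : (M i i).im = -(M i i).im := by
      conv_lhs => rw [this]
      simp [Complex.star_def]
    linarith
  exact Complex.ext (by simp) (by simp [him])

lemma posSemidef_real_smul {d : ℕ} {M : Matrix (Fin d) (Fin d) ℂ}
    (hM : M.PosSemidef) {c : ℝ} (hc : 0 ≤ c) : ((c : ℂ) • M).PosSemidef := by
  refine Matrix.PosSemidef.of_dotProduct_mulVec_nonneg ?_ fun x => ?_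
  · unfold Matrix.IsHermitian
    rw [Matrix.conjTranspose_smul, hM.1]
    congr 1
    simp [Complex.star_def, Complex.conj_ofReal]
  · rw [Matrix.smul_mulVec, dotProduct_smul, smul_eq_mul]
    exact mul_nonneg (by exact_mod_cast hc) (hM.dotProduct_mulVec_nonneg x)

lemma qform_real_smul {d : ℕ} (M : Matrix (Fin d) (Fin d) ℂ) (x : Fin d → ℂ)
    (c : ℝ) : qform ((c : ℂ) • M) x = c * qform M x := by
  simp [qform, Matrix.smul_mulVec, dotProduct_smul, smul_eq_mul,
    Complex.re_ofReal_mul]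

lemma qform_one_sub {d : ℕ} (M : Matrix (Fin d) (Fin d) ℂ) (x : Fin d → ℂ) :
    qform (1 - M) x = qform 1 x - qform M x := by
  simp [qform, Matrix.sub_mulVec, dotProduct_sub, Complex.sub_re]

lemma qform_one_onb {d : ℕ} {v : Fin d → Fin d → ℂ} (hv : IsONB v) (a : Fin d) :
    qform 1 (v a) = 1 := by
  have h := hv a a
  simp only [if_pos rfl] at h
  simp [qform, Matrix.one_mulVec, h]

end NoiseHelpers
noncomputable section NoiseHelpers2

open Finset

lemma one_sub_posSemidef {ρ : Matrix (Fin 2) (Fin 2) ℂ} (hρ : IsDensity ρ) :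
    (1 - ρ).PosSemidef := by
  obtain ⟨hpsd, htr⟩ := hρ
  refine Matrix.PosSemidef.of_dotProduct_mulVec_nonneg (Matrix.isHermitian_one.sub hpsd.1) fun x => ?_
  have key : star x ⬝ᵥ (1 - ρ) *ᵥ x
      = star (![-(star (x 1)), star (x 0)]) ⬝ᵥ ρ *ᵥ ![-(star (x 1)), star (x 0)]
        + (star x ⬝ᵥ x) * (1 - ρ.trace) := by
    simp only [Matrix.sub_mulVec, Matrix.one_mulVec, dotProduct_sub, dotProduct,
      Matrix.mulVec, Fin.sum_univ_two, Pi.star_apply, Matrix.trace, Matrix.diag_apply,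
      Matrix.cons_val_zero, Matrix.cons_val_one, Matrix.head_cons, star_neg, star_star,
      Matrix.sub_apply, Matrix.one_apply, if_true, if_false, Fin.isValue]
    norm_num
    ring
  rw [key, htr]
  simpa using hpsd.dotProduct_mulVec_nonneg ![-(star (x 1)), star (x 0)]

lemma Hobs_one_sub {v : Fin 2 → Fin 2 → ℂ} (hv : IsONB v)
    {ρ : Matrix (Fin 2) (Fin 2) ℂ} (hρ : IsDensity ρ) :
    Hobs v (1 - ρ) = Hobs v ρ := by
  have hsum : qform ρ (v 0) + qform ρ (v 1) = 1 := by
    have h := onb_sum_qform hv ρ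
    rw [Fin.sum_univ_two] at h
    rw [h, hρ.2]
    simp
  have h0 : qform (1 - ρ) (v 0) = qform ρ (v 1) := by
    rw [qform_one_sub, qform_one_onb hv]; linarith
  have h1 : qform (1 - ρ) (v 1) = qform ρ (v 0) := by
    rw [qform_one_sub, qform_one_onb hv]; linarith
  simp only [Hobs, Fin.sum_univ_two, h0, h1]
  ring

lemma inner_noise_eq {v : Fin 2 → Fin 2 → ℂ} {M ρ : Matrix (Fin 2) (Fin 2) ℂ}
    (hrel : ∀ a, qform M (v a) = M.trace.re * qform ρ (v a)) :
    -∑ a, ((1 / ((2 : ℕ) : ℝ)) * qform M (v a)) *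
        Real.logb 2 (((1 / ((2 : ℕ) : ℝ)) * qform M (v a)) /
          ((1 / ((2 : ℕ) : ℝ)) * M.trace.re))
      = (M.trace.re / 2) * Hobs v ρ := by
  set t := M.trace.re with ht
  have h2 : ((2 : ℕ) : ℝ) = 2 := by norm_num
  rcases eq_or_ne t 0 with ht0 | ht0
  · simp [ht0, hrel, Hobs]
  · have key : ∀ a, ((1 / ((2 : ℕ) : ℝ)) * qform M (v a)) *
        Real.logb 2 (((1 / ((2 : ℕ) : ℝ)) * qform M (v a)) /
          ((1 / ((2 : ℕ) : ℝ)) * t))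
        = (t / 2) * (qform ρ (v a) * Real.logb 2 (qform ρ (v a))) := by
      intro a
      rw [hrel a, h2]
      have hq : (1 / 2 * (t * qform ρ (v a))) / (1 / 2 * t) = qform ρ (v a) := by
        field_simp
      rw [hq]
      ring
    simp only [key, ← Finset.mul_sum, Hobs]
    ring

lemma noise_comp_equiv {d : ℕ} {ι κ : Type*} [Fintype ι] [Fintype κ] (e : κ ≃ ι)
    (M : ι → Matrix (Fin d) (Fin d) ℂ) (v : Fin d → Fin d → ℂ) :
    noise (M ∘ e) v = noise M v := by
  unfold noise
  exact congrArg Neg.neg (Fintype.sum_equiv e _ _ fun m => rfl)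

end NoiseHelpers2

/-- For qubits, the set of noise pairs over all POVMs equals the convex hull of the entropic
uncertainty region `E(A,B)`. -/
theorem stmt_6 (vA vB : Fin 2 → Fin 2 → ℂ) (hA : IsONB vA) (hB : IsONB vB) :
    {x : ℝ × ℝ | ∃ (k : ℕ) (M : Fin k → Matrix (Fin 2) (Fin 2) ℂ),
        IsPOVM M ∧ x = (noise M vA, noise M vB)} =
    convexHull ℝ {x : ℝ × ℝ | ∃ ρ : Matrix (Fin 2) (Fin 2) ℂ,
        IsDensity ρ ∧ x = (Hobs vA ρ, Hobs vB ρ)} := by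
  classical
  ext x
  simp only [Set.mem_setOf_eq]
  constructor
  · rintro ⟨k, M, ⟨hpsd, hsum⟩, rfl⟩
    set t : Fin k → ℝ := fun m => (M m).trace.re with ht
    have ht0 : ∀ m, 0 ≤ t m := by
      intro m
      have h1 : t m = ∑ a, qform (M m) (vA a) := (onb_sum_qform hA (M m)).symm
      rw [h1]
      exact Finset.sum_nonneg fun a _ => qform_nonneg (hpsd m) _
    set ρ : Fin k → Matrix (Fin 2) (Fin 2) ℂ := fun m =>
      if t m = 0 then ((1 / 2 : ℝ) : ℂ) • (1 : Matrix (Fin 2) (Fin 2) ℂ)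
      else (((t m)⁻¹ : ℝ) : ℂ) • M m with hρ
    have hrho_pos : ∀ m, t m ≠ 0 → ρ m = (((t m)⁻¹ : ℝ) : ℂ) • M m := by
      intro m h; simp only [hρ, if_neg h]
    have hrho_zero : ∀ m, t m = 0 →
        ρ m = ((1 / 2 : ℝ) : ℂ) • (1 : Matrix (Fin 2) (Fin 2) ℂ) := by
      intro m h; simp only [hρ, if_pos h]
    have hdens : ∀ m, IsDensity (ρ m) := by
      intro m
      by_cases h : t m = 0
      · rw [hrho_zero m h]
        refine ⟨posSemidef_real_smul Matrix.PosSemidef.one (by norm_num), ?_⟩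
        rw [Matrix.trace_smul, Matrix.trace_one]
        norm_num
      · rw [hrho_pos m h]
        refine ⟨posSemidef_real_smul (hpsd m) (inv_nonneg.mpr (ht0 m)), ?_⟩
        rw [Matrix.trace_smul, trace_coe_of_posSemidef (hpsd m)]
        rw [smul_eq_mul, ← Complex.ofReal_mul,
          inv_mul_cancel₀ (show (M m).trace.re ≠ 0 from h), Complex.ofReal_one]
    have hrel : ∀ (v : Fin 2 → Fin 2 → ℂ), IsONB v → ∀ m a,
        qform (M m) (v a) = (M m).trace.re * qform (ρ m) (v a) := by
      intro v hv m a
      rw [show (M m).trace.re = t m from rfl]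
      by_cases h : t m = 0
      · have hz : qform (M m) (v a) = 0 := by
          have hsum0 : ∑ b, qform (M m) (v b) = 0 := by
            rw [onb_sum_qform hv]
            exact h
          exact (Finset.sum_eq_zero_iff_of_nonneg
            (fun b _ => qform_nonneg (hpsd m) (v b))).mp hsum0 a (Finset.mem_univ a)
        rw [hz, h, zero_mul]
      · rw [hrho_pos m h, qform_real_smul]
        field_simp
    have hnoise : ∀ (v : Fin 2 → Fin 2 → ℂ), IsONB v →
        noise M v = ∑ m, (t m / 2) * Hobs v (ρ m) := by
      intro v hv
      rw [noise, ← Finset.sum_neg_distrib]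
      exact Finset.sum_congr rfl fun m _ => inner_noise_eq (hrel v hv m)
    have hsumw : ∑ m, t m / 2 = 1 := by
      have h1 : ∑ m, (M m).trace = (2 : ℂ) := by
        rw [← Matrix.trace_sum, hsum, Matrix.trace_one]
        norm_num
      have h2 : ∑ m, t m = 2 := by
        have h3 := congrArg Complex.re h1
        rw [Complex.re_sum] at h3
        simpa using h3
      rw [← Finset.sum_div, h2]
      norm_num
    have hx : ((noise M vA, noise M vB) : ℝ × ℝ)
        = Finset.univ.centerMass (fun m => t m / 2)
            (fun m => ((Hobs vA (ρ m), Hobs vB (ρ m)) : ℝ × ℝ)) := by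
      rw [Finset.centerMass, hsumw, inv_one, one_smul]
      refine Prod.ext ?_ ?_ <;>
        simp only [Prod.fst_sum, Prod.snd_sum, Prod.smul_fst, Prod.smul_snd, smul_eq_mul]
      · exact hnoise vA hA
      · exact hnoise vB hB
    rw [hx]
    exact Finset.centerMass_mem_convexHull _ (fun m _ => div_nonneg (ht0 m) (by norm_num))
      (by rw [hsumw]; norm_num) (fun m _ => ⟨ρ m, hdens m, rfl⟩)
  · intro hx
    rw [convexHull_eq] at hx
    obtain ⟨ι, s, w, z, hw0, hw1, hz, hcm⟩ := hx
    have H : ∀ i : {i // i ∈ s}, ∃ ρ, IsDensity ρ ∧ z i = (Hobs vA ρ, Hobs vB ρ) :=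
      fun i => hz i i.2
    choose ρ hρ hzρ using H
    set n := s.card with hn
    set e : ({i // i ∈ s} × Fin 2) ≃ Fin (n * 2) :=
      (s.equivFin.prodCongr (Equiv.refl (Fin 2))).trans finProdFinEquiv with he
    set M' : {i // i ∈ s} × Fin 2 → Matrix (Fin 2) (Fin 2) ℂ := fun p =>
      ((w p.1 : ℝ) : ℂ) • (if p.2 = 0 then ρ p.1 else 1 - ρ p.1) with hM'
    have hM0 : ∀ i : {i // i ∈ s}, M' (i, 0) = ((w i : ℝ) : ℂ) • ρ i := by
      intro i; simp [hM']
    have hM1 : ∀ i : {i // i ∈ s}, M' (i, 1) = ((w i : ℝ) : ℂ) • (1 - ρ i) := by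
      intro i; simp [hM']
    have hwnn : ∀ i : {i // i ∈ s}, 0 ≤ w i := fun i => hw0 i i.2
    have hpsd' : ∀ p, (M' p).PosSemidef := by
      intro p
      rw [hM']
      dsimp only
      split
      · exact posSemidef_real_smul ((hρ p.1).1) (hwnn p.1)
      · exact posSemidef_real_smul (one_sub_posSemidef (hρ p.1)) (hwnn p.1)
    have hsum' : ∑ p, M' p = 1 := by
      rw [Fintype.sum_prod_type]
      have h1 : ∀ i : {i // i ∈ s}, ∑ b : Fin 2, M' (i, b) = ((w i : ℝ) : ℂ) • 1 := by
        intro i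
        rw [Fin.sum_univ_two, hM0, hM1, ← smul_add]
        congr 1
        abel
      rw [Finset.sum_congr rfl fun i _ => h1 i, ← Finset.sum_smul]
      have h2 : ∑ i : {i // i ∈ s}, ((w i : ℝ) : ℂ) = ((∑ i ∈ s, w i : ℝ) : ℂ) := by
        rw [← Finset.sum_coe_sort s w]
        push_cast
        rfl
      rw [h2, hw1, Complex.ofReal_one, one_smul]
    have htr0 : ∀ i : {i // i ∈ s}, (M' (i, 0)).trace.re = w i := by
      intro i
      rw [hM0, Matrix.trace_smul, smul_eq_mul, (hρ i).2, mul_one]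
      simp
    have htr1 : ∀ i : {i // i ∈ s}, (M' (i, 1)).trace.re = w i := by
      intro i
      rw [hM1, Matrix.trace_smul, smul_eq_mul, Matrix.trace_sub, Matrix.trace_one,
        (hρ i).2]
      norm_num
    have hnoise' : ∀ (v : Fin 2 → Fin 2 → ℂ), IsONB v →
        noise M' v = ∑ i : {i // i ∈ s}, w i * Hobs v (ρ i) := by
      intro v hv
      rw [noise, ← Finset.sum_neg_distrib, Fintype.sum_prod_type]
      refine Finset.sum_congr rfl fun i _ => ?_
      rw [Fin.sum_univ_two]
      have e0 : -∑ a, ((1 / ((2:ℕ) : ℝ)) * qform (M' (i, 0)) (v a)) *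
          Real.logb 2 (((1 / ((2:ℕ) : ℝ)) * qform (M' (i, 0)) (v a)) /
            ((1 / ((2:ℕ) : ℝ)) * (M' (i, 0)).trace.re))
          = ((M' (i, 0)).trace.re / 2) * Hobs v (ρ i) := by
        refine inner_noise_eq fun a => ?_
        rw [htr0 i, hM0, qform_real_smul]
      have e1 : -∑ a, ((1 / ((2:ℕ) : ℝ)) * qform (M' (i, 1)) (v a)) *
          Real.logb 2 (((1 / ((2:ℕ) : ℝ)) * qform (M' (i, 1)) (v a)) /
            ((1 / ((2:ℕ) : ℝ)) * (M' (i, 1)).trace.re))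
          = ((M' (i, 1)).trace.re / 2) * Hobs v (1 - ρ i) := by
        refine inner_noise_eq fun a => ?_
        rw [htr1 i, hM1, qform_real_smul]
      rw [e0, e1, htr0 i, htr1 i, Hobs_one_sub hv (hρ i)]
      ring
    refine ⟨n * 2, M' ∘ e.symm, ⟨fun m => hpsd' _, ?_⟩, ?_⟩
    · exact (Equiv.sum_comp e.symm M').trans hsum'
    · have hA' : noise (M' ∘ e.symm) vA = ∑ i : {i // i ∈ s}, w i * Hobs vA (ρ i) := by
        rw [noise_comp_equiv e.symm M' vA, hnoise' vA hA]
      have hB' : noise (M' ∘ e.symm) vB = ∑ i : {i // i ∈ s}, w i * Hobs vB (ρ i) := by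
        rw [noise_comp_equiv e.symm M' vB, hnoise' vB hB]
      rw [hA', hB', ← hcm, Finset.centerMass, hw1, inv_one, one_smul,
        ← Finset.sum_coe_sort s (fun i => w i • z i)]
      refine Prod.ext ?_ ?_ <;>
        simp only [Prod.fst_sum, Prod.snd_sum]
      · exact (Finset.sum_congr rfl fun i _ => by
          rw [hzρ i]
          simp [smul_eq_mul]).symm
      · exact (Finset.sum_congr rfl fun i _ => by
          rw [hzρ i]
          simp [smul_eq_mul]).symm
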